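/- Let k = 2^m · r where m > 0 is an integer and r is an odd positive integer. Then for all integers n ≥ 1, the number of overpartition k-tuples with odd parts satisfies OPT_k(n) ≡ 0 (mod 2^{m+1}). -/
import Mathlib

/-- An overpartition with odd parts, encoded as a pair of multisets of odd
(hence positive) integers: the overlined parts (which are distinct, since the
last occurrence of each part size may be overlined) and the non-overlined
parts. -/
def IsOddOverpartition (p : Multiset ℕ × Multiset ℕ) : Prop :=
  p.1.Nodup ∧ (∀ x ∈ p.1, Odd x) ∧ (∀ x ∈ p.2, Odd x)

/-- `OPT k n` is the number of overpartition `k`-tuples of `n` with odd parts,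
with generating function `∏_{i≥1} ((1+q^{2i-1})/(1-q^{2i-1}))^k`. -/
noncomputable def OPT (k n : ℕ) : ℕ :=
  Set.ncard {f : Fin k → Multiset ℕ × Multiset ℕ |
    (∀ i, IsOddOverpartition (f i)) ∧ (∑ i, ((f i).1.sum + (f i).2.sum)) = n}

namespace OPTaux

set_option linter.unusedSectionVars false
set_option linter.unusedVariables false


abbrev X := Multiset ℕ × Multiset ℕ

def wt (p : X) : ℕ := p.1.sum + p.2.sum

def Tset (k n : ℕ) : Set (Fin k → X) :=
  {f | (∀ i, IsOddOverpartition (f i)) ∧ (∑ i, wt (f i)) = n}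

lemma opt_eq (k n : ℕ) : OPT k n = (Tset k n).ncard := rfl

lemma sup_mem {s : Multiset ℕ} (h : s ≠ 0) : s.sup ∈ s := by
  induction s using Multiset.induction with
  | empty => simp at h
  | cons a t ih =>
    rw [Multiset.sup_cons]
    rcases eq_or_ne t 0 with rfl | ht
    · simp
    · rcases le_total a t.sup with h' | h'
      · rw [sup_eq_right.mpr h']
        exact Multiset.mem_cons_of_mem (ih ht)
      · rw [sup_eq_left.mpr h']
        exact Multiset.mem_cons_self a t

lemma finite_msets (n : ℕ) : {s : Multiset ℕ | (∀ x ∈ s, 0 < x) ∧ s.sum ≤ n}.Finite := by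
  have hsub : {s : Multiset ℕ | (∀ x ∈ s, 0 < x) ∧ s.sum ≤ n} ⊆
      ⋃ j ∈ Set.Iic n, Set.range (fun P : Nat.Partition j => P.parts) := by
    intro s hs
    refine Set.mem_biUnion (show s.sum ∈ Set.Iic n from hs.2) ?_
    exact ⟨⟨s, fun hx => hs.1 _ hx, rfl⟩, rfl⟩
  exact ((Set.finite_Iic n).biUnion fun j _ => Set.finite_range _).subset hsub

lemma finite_Tset (k n : ℕ) : (Tset k n).Finite := by
  classical
  set B : Set X := {p : X | (∀ x ∈ p.1, 0 < x) ∧ p.1.sum ≤ n} ∩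
      {p : X | (∀ x ∈ p.2, 0 < x) ∧ p.2.sum ≤ n} with hB
  have hBfin : B.Finite := by
    have h1 := (finite_msets n).prod (finite_msets n)
    refine h1.subset ?_
    rintro ⟨s, t⟩ ⟨h1, h2⟩
    exact ⟨h1, h2⟩
  have : Tset k n ⊆ Set.pi Set.univ (fun _ : Fin k => B) := by
    rintro f ⟨hodd, hsum⟩ i _
    have hle : wt (f i) ≤ n := hsum ▸ Finset.single_le_sum (f := fun i => wt (f i))
      (fun _ _ => Nat.zero_le _) (Finset.mem_univ i)
    have h1 : ∀ x ∈ (f i).1, 0 < x := fun x hx => ((hodd i).2.1 x hx).pos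
    have h2 : ∀ x ∈ (f i).2, 0 < x := fun x hx => ((hodd i).2.2 x hx).pos
    have hle1 : (f i).1.sum ≤ n := le_trans (Nat.le_add_right _ _) hle
    have hle2 : (f i).2.sum ≤ n := le_trans (Nat.le_add_left _ _) hle
    exact ⟨⟨h1, hle1⟩, ⟨h2, hle2⟩⟩
  exact (Set.Finite.pi (fun _ => hBfin)).subset this

lemma wt_eq_zero {p : X} (h : IsOddOverpartition p) (hw : wt p = 0) : p = (0, 0) := by
  have h1 : p.1.sum = 0 := by unfold wt at hw; omega
  have h2 : p.2.sum = 0 := by unfold wt at hw; omega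
  have e1 : p.1 = 0 := by
    rw [Multiset.eq_zero_iff_forall_notMem]
    intro a ha
    have := Multiset.sum_eq_zero_iff.mp h1 a ha
    exact (h.2.1 a ha).pos.ne' this
  have e2 : p.2 = 0 := by
    rw [Multiset.eq_zero_iff_forall_notMem]
    intro a ha
    have := Multiset.sum_eq_zero_iff.mp h2 a ha
    exact (h.2.2 a ha).pos.ne' this
  exact Prod.ext e1 e2

lemma wt_pos {p : X} (h : IsOddOverpartition p) (hp : p ≠ (0, 0)) : 0 < wt p := by
  rcases Nat.eq_zero_or_pos (wt p) with h0 | h0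
  · exact absurd (wt_eq_zero h h0) hp
  · exact h0

lemma opt_zero (k : ℕ) : OPT k 0 = 1 := by
  rw [opt_eq]
  have : Tset k 0 = {fun _ => (0, 0)} := by
    ext f
    constructor
    · rintro ⟨hodd, hsum⟩
      have : ∀ i, f i = (0, 0) := fun i =>
        wt_eq_zero (hodd i) (Finset.sum_eq_zero_iff.mp hsum i (Finset.mem_univ i))
      exact funext this
    · rintro rfl
      exact ⟨fun i => ⟨Multiset.nodup_zero, by simp, by simp⟩, by simp [wt]⟩
  rw [this, Set.ncard_singleton]

/-- toggle the overline on the largest part -/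
def tog (p : X) : X :=
  if (p.1 + p.2).sup ∈ p.1 then (p.1.erase ((p.1 + p.2).sup), ((p.1 + p.2).sup) ::ₘ p.2)
  else (((p.1 + p.2).sup) ::ₘ p.1, p.2.erase ((p.1 + p.2).sup))

lemma tog_eval (a b : Multiset ℕ) : tog (a, b) =
    if (a + b).sup ∈ a then (a.erase ((a + b).sup), ((a + b).sup) ::ₘ b)
    else (((a + b).sup) ::ₘ a, b.erase ((a + b).sup)) := rfl

section tog
variable {p : X} (h : IsOddOverpartition p) (hp : p ≠ (0, 0))
include hp

omit hp in
lemma ne_zero_iff_comb : p ≠ (0, 0) ↔ p.1 + p.2 ≠ 0 := by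
  constructor
  · intro hp h0
    have hc := congrArg Multiset.card h0
    rw [Multiset.card_add] at hc
    simp only [Multiset.card_zero] at hc
    exact hp (Prod.ext (Multiset.card_eq_zero.mp (by omega))
      (Multiset.card_eq_zero.mp (by omega)))
  · intro h0 hp
    rw [hp] at h0; simp at h0

lemma sup_mem_comb : (p.1 + p.2).sup ∈ p.1 + p.2 := sup_mem (ne_zero_iff_comb.mp hp)

lemma tog_comb : (tog p).1 + (tog p).2 = p.1 + p.2 := by
  unfold tog
  set M := (p.1 + p.2).sup with hM
  split_ifs with h1
  · show p.1.erase M + (M ::ₘ p.2) = p.1 + p.2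
    rw [Multiset.add_cons, ← Multiset.cons_add, Multiset.cons_erase h1]
  · show (M ::ₘ p.1) + p.2.erase M = p.1 + p.2
    have h2 : M ∈ p.2 := by
      rcases Multiset.mem_add.mp (sup_mem_comb hp) with h' | h'
      · exact absurd h' h1
      · exact h'
    rw [Multiset.cons_add, ← Multiset.add_cons, Multiset.cons_erase h2]

lemma tog_wt : wt (tog p) = wt p := by
  have := tog_comb hp
  unfold wt
  rw [← Multiset.sum_add, ← Multiset.sum_add, this]

include h in
lemma tog_isOdd : IsOddOverpartition (tog p) := by
  have hModd : Odd ((p.1 + p.2).sup) := by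
    rcases Multiset.mem_add.mp (sup_mem_comb hp) with h' | h'
    · exact h.2.1 _ h'
    · exact h.2.2 _ h'
  unfold tog
  split_ifs with h1
  · exact ⟨h.1.erase _, fun x hx => h.2.1 x (Multiset.mem_of_mem_erase hx),
      fun x hx => by
        rcases Multiset.mem_cons.mp hx with rfl | hx'
        · exact hModd
        · exact h.2.2 x hx'⟩
  · exact ⟨Multiset.nodup_cons.mpr ⟨h1, h.1⟩,
      fun x hx => by
        rcases Multiset.mem_cons.mp hx with rfl | hx'
        · exact hModd
        · exact h.2.1 x hx',
      fun x hx => h.2.2 x (Multiset.mem_of_mem_erase hx)⟩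

include h in
omit hp in
lemma tog_ne : tog p ≠ p := by
  unfold tog
  split_ifs with h1
  · intro he
    have h2 : (p.1.erase ((p.1 + p.2).sup)) = p.1 := congrArg Prod.fst he
    have h3 := congrArg (Multiset.count ((p.1 + p.2).sup)) h2
    rw [Multiset.count_erase_self] at h3
    have h4 := Multiset.count_pos.mpr h1
    omega
  · intro he
    have h2 : ((p.1 + p.2).sup) ::ₘ p.1 = p.1 := congrArg Prod.fst he
    have h3 := congrArg (Multiset.count ((p.1 + p.2).sup)) h2
    rw [Multiset.count_cons_self] at h3
    omega

include h in
lemma tog_ne_zero : tog p ≠ (0, 0) := by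
  intro h0
  have h1 := wt_pos h hp
  have h2 := tog_wt hp
  rw [h0] at h2
  simp [wt] at h1 h2
  omega

include h in
lemma tog_tog : tog (tog p) = p := by
  set M := (p.1 + p.2).sup with hM
  by_cases h1 : M ∈ p.1
  · have htp : tog p = (p.1.erase M, M ::ₘ p.2) := by unfold tog; rw [if_pos h1]
    have hq : p.1.erase M + (M ::ₘ p.2) = p.1 + p.2 := by
      rw [Multiset.add_cons, ← Multiset.cons_add, Multiset.cons_erase h1]
    rw [htp, tog_eval, hq, ← hM, if_neg h.1.notMem_erase]
    rw [Multiset.cons_erase h1, Multiset.erase_cons_head]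
  · have h2 : M ∈ p.2 := by
      rcases Multiset.mem_add.mp (sup_mem_comb hp) with h' | h'
      · exact absurd h' h1
      · exact h'
    have htp : tog p = (M ::ₘ p.1, p.2.erase M) := by unfold tog; rw [if_neg h1]
    have hq : (M ::ₘ p.1) + p.2.erase M = p.1 + p.2 := by
      rw [Multiset.cons_add, ← Multiset.add_cons, Multiset.cons_erase h2]
    rw [htp, tog_eval, hq, ← hM, if_pos (Multiset.mem_cons_self _ _)]
    rw [Multiset.erase_cons_head, Multiset.cons_erase h2]

end tog

section even
variable {k n : ℕ}

/-- the support of a tuple -/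
def supp (f : Fin k → X) : Finset (Fin k) := Finset.univ.filter (fun i => f i ≠ (0, 0))

lemma supp_nonempty (hn : 1 ≤ n) {f : Fin k → X} (hf : f ∈ Tset k n) : (supp f).Nonempty := by
  by_contra hne
  rw [Finset.not_nonempty_iff_eq_empty] at hne
  have hall : ∀ i, f i = (0, 0) := by
    intro i
    by_contra hi
    have : i ∈ supp f := Finset.mem_filter.mpr ⟨Finset.mem_univ i, hi⟩
    rw [hne] at this
    exact absurd this (Finset.notMem_empty i)
  have : (∑ i, wt (f i)) = 0 := Finset.sum_eq_zero fun i _ => by rw [hall i]; rfl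
  rw [hf.2] at this
  omega

/-- the involution: toggle at the first nonempty component -/
noncomputable def sig (f : Fin k → X) : Fin k → X :=
  if h : (supp f).Nonempty then
    Function.update f ((supp f).min' h) (tog (f ((supp f).min' h)))
  else f

lemma sig_apply {f : Fin k → X} (h : (supp f).Nonempty) :
    sig f = Function.update f ((supp f).min' h) (tog (f ((supp f).min' h))) := dif_pos h

variable {f : Fin k → X} (h : (supp f).Nonempty) (hodd : ∀ i, IsOddOverpartition (f i))
include h hodd

omit hodd in
lemma i0_ne : f ((supp f).min' h) ≠ (0, 0) :=
  (Finset.mem_filter.mp (Finset.min'_mem _ h)).2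

lemma supp_sig : supp (sig f) = supp f := by
  classical
  set i0 := (supp f).min' h with hi0
  have hne : f i0 ≠ (0, 0) := i0_ne h
  rw [sig_apply h, ← hi0]
  unfold supp
  apply Finset.ext
  intro i
  simp only [Finset.mem_filter, Finset.mem_univ, true_and]
  rcases eq_or_ne i i0 with rfl | hii
  · rw [Function.update_self]
    exact ⟨fun _ => hne, fun _ => tog_ne_zero (hodd _) hne⟩
  · rw [Function.update_of_ne hii]

lemma sig_wt : ∑ i, wt (sig f i) = ∑ i, wt (f i) := by
  classical
  set i0 := (supp f).min' h with hi0
  have hne : f i0 ≠ (0, 0) := i0_ne h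
  have key : ∀ g : Fin k → X,
      ∑ i, wt (g i) = wt (g i0) + ∑ i ∈ Finset.univ.erase i0, wt (g i) :=
    fun g => (Finset.add_sum_erase _ _ (Finset.mem_univ i0)).symm
  rw [key (sig f), key f]
  have h1 : wt (sig f i0) = wt (f i0) := by
    rw [sig_apply h, ← hi0, Function.update_self, tog_wt hne]
  have h2 : ∑ i ∈ Finset.univ.erase i0, wt (sig f i) =
      ∑ i ∈ Finset.univ.erase i0, wt (f i) := by
    refine Finset.sum_congr rfl fun i hi => ?_
    rw [sig_apply h, ← hi0, Function.update_of_ne (Finset.mem_erase.mp hi).1]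
  rw [h1, h2]

lemma sig_isOdd : ∀ i, IsOddOverpartition (sig f i) := by
  classical
  intro i
  rw [sig_apply h]
  rcases eq_or_ne i ((supp f).min' h) with rfl | hii
  · rw [Function.update_self]
    exact tog_isOdd (hodd _) (i0_ne h)
  · rw [Function.update_of_ne hii]
    exact hodd i

lemma sig_sig : sig (sig f) = f := by
  classical
  set i0 := (supp f).min' h with hi0
  have hne : f i0 ≠ (0, 0) := i0_ne h
  have hs : supp (sig f) = supp f := supp_sig h hodd
  have h2 : (supp (sig f)).Nonempty := by rw [hs]; exact h
  have hmin : (supp (sig f)).min' h2 = i0 := by simp only [hs, hi0]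
  rw [sig_apply h2, hmin, sig_apply h, ← hi0]
  rw [Function.update_self, tog_tog (hodd i0) hne]
  rw [Function.update_idem, Function.update_eq_self]

lemma sig_ne : sig f ≠ f := by
  classical
  intro he
  have := congrFun he ((supp f).min' h)
  rw [sig_apply h, Function.update_self] at this
  exact tog_ne (hodd ((supp f).min' h)) this

end even

lemma opt_even (k n : ℕ) (hn : 1 ≤ n) : 2 ∣ OPT k n := by
  classical
  rw [opt_eq, Set.ncard_eq_toFinset_card _ (finite_Tset k n)]
  set F := (finite_Tset k n).toFinset with hF
  rw [← ZMod.natCast_eq_zero_iff]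
  have hcard : ((F.card : ZMod 2)) = ∑ _x ∈ F, (1 : ZMod 2) := by
    rw [Finset.sum_const, nsmul_eq_mul, mul_one]
  rw [hcard]
  have hmem : ∀ f ∈ F, f ∈ Tset k n := fun f hf => (Set.Finite.mem_toFinset _).mp hf
  have hsig_mem : ∀ f (hf : f ∈ Tset k n), sig f ∈ Tset k n := by
    intro f hf
    have h := supp_nonempty hn hf
    exact ⟨sig_isOdd h hf.1, by rw [sig_wt h hf.1]; exact hf.2⟩
  refine Finset.sum_involution (fun f _ => sig f) (fun f hf => by decide)
    (fun f hf _ => sig_ne (supp_nonempty hn (hmem f hf)) (hmem f hf).1)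
    (fun f hf => (Set.Finite.mem_toFinset _).mpr (hsig_mem f (hmem f hf)))
    (fun f hf => sig_sig (supp_nonempty hn (hmem f hf)) (hmem f hf).1)

def gsplit (a b : ℕ) (f : Fin (a + b) → X) : ℕ := ∑ j : Fin a, wt (f (Fin.castAdd b j))

def resPair (a b : ℕ) (f : Fin (a + b) → X) : (Fin a → X) × (Fin b → X) :=
  (fun j => f (Fin.castAdd b j), fun j => f (Fin.natAdd a j))

lemma opt_conv (a b n : ℕ) :
    OPT (a + b) n = ∑ i ∈ Finset.range (n + 1), OPT a i * OPT b (n - i) := by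
  classical
  have hsplit : ∀ f : Fin (a + b) → X, ∑ i, wt (f i) =
      (∑ j : Fin a, wt (f (Fin.castAdd b j))) + ∑ j : Fin b, wt (f (Fin.natAdd a j)) :=
    fun f => Fin.sum_univ_add (f := fun i => wt (f i))
  rw [opt_eq, Set.ncard_eq_toFinset_card _ (finite_Tset (a + b) n)]
  set F := (finite_Tset (a + b) n).toFinset with hF
  have hmapsto : ∀ f ∈ F, gsplit a b f ∈ Finset.range (n + 1) := by
    intro f hf
    have hf' : f ∈ Tset (a + b) n := (Set.Finite.mem_toFinset _).mp hf
    have := hsplit f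
    rw [hf'.2] at this
    rw [Finset.mem_range]; simp only [gsplit]
    omega
  rw [Finset.card_eq_sum_card_fiberwise hmapsto]
  refine Finset.sum_congr rfl fun i hi => ?_
  have hin : i ≤ n := by
    rw [Finset.mem_range] at hi; omega
  rw [opt_eq, opt_eq, Set.ncard_eq_toFinset_card _ (finite_Tset a i),
    Set.ncard_eq_toFinset_card _ (finite_Tset b (n - i)), ← Finset.card_product]
  refine Finset.card_bij'
    (fun f _ => resPair a b f)
    (fun q _ => Fin.append q.1 q.2) ?_ ?_ ?_ ?_
  · -- forward membership
    intro f hf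
    rw [Finset.mem_filter] at hf
    obtain ⟨hfF, hgi⟩ := hf
    simp only [gsplit] at hgi
    have hf' : f ∈ Tset (a + b) n := (Set.Finite.mem_toFinset _).mp hfF
    have hsum := hsplit f
    rw [hf'.2, hgi] at hsum
    rw [Finset.mem_product]; simp only [resPair]
    constructor
    · rw [Set.Finite.mem_toFinset]
      exact ⟨fun j => hf'.1 _, hgi⟩
    · rw [Set.Finite.mem_toFinset]
      refine ⟨fun j => hf'.1 _, ?_⟩
      show (∑ j : Fin b, wt (f (Fin.natAdd a j))) = n - i
      omega
  · -- backward membership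
    rintro ⟨u, v⟩ hq
    rw [Finset.mem_product, Set.Finite.mem_toFinset, Set.Finite.mem_toFinset] at hq
    obtain ⟨hu, hv⟩ := hq
    have hodd : ∀ j, IsOddOverpartition (Fin.append u v j) := by
      intro j
      refine Fin.addCases (fun j' => ?_) (fun j' => ?_) j
      · rw [Fin.append_left]; exact hu.1 j'
      · rw [Fin.append_right]; exact hv.1 j'
    have h1 : ∑ j : Fin a, wt (Fin.append u v (Fin.castAdd b j)) = i := by
      simp only [Fin.append_left]
      exact hu.2
    have h2 : ∑ j : Fin b, wt (Fin.append u v (Fin.natAdd a j)) = n - i := by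
      simp only [Fin.append_right]
      exact hv.2
    rw [Finset.mem_filter, Set.Finite.mem_toFinset]
    refine ⟨⟨hodd, ?_⟩, ?_⟩
    · rw [hsplit, h1, h2]
      omega
    · show gsplit a b (Fin.append u v) = i
      simp only [gsplit]
      exact h1
  · -- left inverse
    intro f _
    show Fin.append (resPair a b f).1 (resPair a b f).2 = f
    funext j
    simp only [resPair]
    refine Fin.addCases (fun j' => ?_) (fun j' => ?_) j
    · rw [Fin.append_left]
    · rw [Fin.append_right]
  · -- right inverse
    rintro ⟨u, v⟩ _
    show resPair a b (Fin.append u v) = (u, v)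
    simp only [resPair]
    refine Prod.ext ?_ ?_
    · funext j; simp [Fin.append_left]
    · funext j; simp [Fin.append_right]

lemma opt_double (t k : ℕ) (ht : 1 ≤ t) (H : ∀ n, 1 ≤ n → 2 ^ t ∣ OPT k n) :
    ∀ n, 1 ≤ n → 2 ^ (t + 1) ∣ OPT (k + k) n := by
  intro n hn
  rw [opt_conv]
  have hset : Finset.range (n + 1) = insert 0 (insert n (Finset.Ioo 0 n)) := by
    ext j
    simp only [Finset.mem_insert, Finset.mem_Ioo, Finset.mem_range]
    omega
  have h0 : (0 : ℕ) ∉ insert n (Finset.Ioo 0 n) := by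
    simp only [Finset.mem_insert, Finset.mem_Ioo]
    omega
  have hnn : n ∉ Finset.Ioo 0 n := by simp
  rw [hset, Finset.sum_insert h0, Finset.sum_insert hnn, ← add_assoc,
    Nat.sub_zero, Nat.sub_self, opt_zero k, one_mul, mul_one]
  refine Nat.dvd_add ?_ ?_
  · obtain ⟨c, hc⟩ := H n hn
    exact ⟨c, by rw [hc]; ring⟩
  · refine Finset.dvd_sum fun i hi => ?_
    rw [Finset.mem_Ioo] at hi
    have d1 := H i (by omega)
    have d2 := H (n - i) (by omega)
    calc 2 ^ (t + 1) ∣ 2 ^ (t + t) := pow_dvd_pow 2 (by omega)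
      _ = 2 ^ t * 2 ^ t := pow_add 2 t t
      _ ∣ OPT k i * OPT k (n - i) := mul_dvd_mul d1 d2

lemma opt_main (r : ℕ) : ∀ m n : ℕ, 1 ≤ n → 2 ^ (m + 1) ∣ OPT (2 ^ m * r) n := by
  intro m
  induction m with
  | zero =>
    intro n hn
    rw [pow_zero, one_mul, pow_one]
    exact opt_even r n hn
  | succ m ih =>
    intro n hn
    have hk : 2 ^ (m + 1) * r = 2 ^ m * r + 2 ^ m * r := by ring
    rw [hk]
    exact opt_double (m + 1) (2 ^ m * r) (by omega) ih n hn

end OPTaux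

/-- If `k = 2^m · r` with `m > 0` and `r` odd and positive, then for all `n ≥ 1`,
`OPT_k(n) ≡ 0 (mod 2^{m+1})`. -/
theorem opt_tuple_mod_pow_two (m r k : ℕ) (hm : 0 < m) (hr : Odd r) (hrpos : 0 < r)
    (hk : k = 2 ^ m * r) (n : ℕ) (hn : 1 ≤ n) :
    OPT k n ≡ 0 [MOD 2 ^ (m + 1)] := by
  rw [Nat.modEq_zero_iff_dvd, hk]
  exact OPTaux.opt_main r m n hn
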